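/- For all s, t ∈ ℂ⁸ one has the identity (t̄t)·s − (t̄s)·t = (1/6)·Σ_{μ,ν=1}^{7}(s̄Γ_{μν}t)·Γ_{μν}t in ℂ⁸. (This is the identity (t̄t)s − (t̄s)t = (1/3)·ω^{(2)}(s,t)·t, where ω^{(2)}(s,t) = (1/2)Σ_{μ,ν}(s̄Γ^{μν}t)Γ_{μν} is the bivector-valued bilinear acting on t by Clifford multiplication; it encodes the odd–odd–odd Jacobi identity of F(4) in its odd contact grading.) -/

import Mathlib

open Matrix

noncomputable section

/-- The antisymmetrized product `Γ_{μν} = (1/2)(Γ_μΓ_ν − Γ_νΓ_μ)`. -/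
def gamma2 (Γ : Fin 7 → Matrix (Fin 8) (Fin 8) ℂ) (μ ν : Fin 7) :
    Matrix (Fin 8) (Fin 8) ℂ :=
  (2 : ℂ)⁻¹ • (Γ μ * Γ ν - Γ ν * Γ μ)

namespace OddJacobiAux

abbrev M8 := Matrix (Fin 8) (Fin 8) ℂ

/-- product of gammas along a list -/
def pl (Γ : Fin 7 → M8) (l : List (Fin 7)) : M8 := (l.map Γ).prod

variable {Γ : Fin 7 → M8}
  (hΓ : ∀ μ ν, Γ μ * Γ ν + Γ ν * Γ μ =
      if μ = ν then (-2 : ℂ) • (1 : M8) else 0)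

lemma pl_nil : pl Γ [] = 1 := rfl

lemma pl_cons (a : Fin 7) (l : List (Fin 7)) : pl Γ (a :: l) = Γ a * pl Γ l := by
  simp [pl]

lemma pl_append (l m : List (Fin 7)) : pl Γ (l ++ m) = pl Γ l * pl Γ m := by
  simp [pl]

include hΓ

lemma gsq (i : Fin 7) : Γ i * Γ i = -1 := by
  have h := hΓ i i
  rw [if_pos rfl] at h
  have h2 : (2 : ℂ) • (Γ i * Γ i) = (-2 : ℂ) • (1 : M8) := by
    rw [two_smul]; exact h
  have h3 := congrArg (fun X => ((2 : ℂ)⁻¹) • X) h2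
  simp only [smul_smul] at h3
  norm_num at h3
  simpa using h3

lemma gswap {i j : Fin 7} (h : i ≠ j) : Γ i * Γ j = -(Γ j * Γ i) := by
  have h' := hΓ i j
  rw [if_neg h] at h'
  have := eq_neg_of_add_eq_zero_left h'
  exact this

/-- move a gamma from the right across a product avoiding its index -/
lemma com_right {j : Fin 7} {l : List (Fin 7)} (h : j ∉ l) :
    pl Γ l * Γ j = ((-1 : ℂ)) ^ l.length • (Γ j * pl Γ l) := by
  induction l with
  | nil => simp [pl_nil]
  | cons a l ih =>
      have hja : j ≠ a := by rintro rfl; exact h List.mem_cons_self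
      have hjl : j ∉ l := fun hm => h (List.mem_cons_of_mem _ hm)
      rw [pl_cons, mul_assoc, ih hjl, mul_smul_comm]
      have key : Γ a * (Γ j * pl Γ l) = -(Γ j * (Γ a * pl Γ l)) := by
        rw [← mul_assoc, gswap hΓ (Ne.symm hja)]
        simp [neg_mul, mul_assoc]
      rw [key, smul_neg, ← neg_smul, List.length_cons, pow_succ, mul_neg_one]

/-- move a gamma from the left across a product avoiding its index -/
lemma com_left {j : Fin 7} {l : List (Fin 7)} (h : j ∉ l) :
    Γ j * pl Γ l = ((-1 : ℂ)) ^ l.length • (pl Γ l * Γ j) := by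
  have h1 := com_right hΓ h
  rw [h1, smul_smul, ← pow_add]
  have h2 : (-1 : ℂ) ^ (l.length + l.length) = 1 := by
    rw [← two_mul, pow_mul]; norm_num
  rw [h2, one_smul]

lemma trace_pl_eq_zero {l : List (Fin 7)} (hl : l.Nodup) (hne : l ≠ [])
    (hlen : l.length ≤ 6) : (pl Γ l).trace = 0 := by
  rcases Nat.even_or_odd l.length with he | ho
  · -- even length ≥ 2 : peel off head
    obtain ⟨a, l', rfl⟩ := List.exists_cons_of_ne_nil hne
    have ha : a ∉ l' := (List.nodup_cons.mp hl).1
    have hodd : Odd l'.length := by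
      rw [List.length_cons] at he
      exact Nat.not_even_iff_odd.mp (Nat.even_add_one.mp he)
    have key : (pl Γ (a :: l')).trace = -(pl Γ (a :: l')).trace := by
      conv_lhs => rw [pl_cons, trace_mul_comm, com_right hΓ ha]
      rw [trace_smul, Odd.neg_one_pow hodd, ← pl_cons]
      simp
    have h2 : (pl Γ (a :: l')).trace + (pl Γ (a :: l')).trace = 0 := by
      linear_combination key
    exact add_self_eq_zero.mp h2
  · -- odd length : conjugate by an unused index
    obtain ⟨j, hj⟩ : ∃ j : Fin 7, j ∉ l := by
      by_contra hcon
      push_neg at hcon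
      have huniv : l.toFinset = Finset.univ :=
        Finset.eq_univ_iff_forall.mpr (fun x => List.mem_toFinset.mpr (hcon x))
      have := congrArg Finset.card huniv
      rw [List.toFinset_card_of_nodup hl] at this
      simp at this
      omega
    set A := pl Γ l with hA
    have e1 : Γ j * (A * Γ j) = ((-1 : ℂ)) ^ (l.length + 1) • A := by
      rw [com_right hΓ hj, mul_smul_comm, ← mul_assoc, gsq hΓ j,
        neg_one_mul, smul_neg, pow_succ, mul_neg_one, neg_smul]
    have e2 : (Γ j * (A * Γ j)).trace = -A.trace := by
      rw [← mul_assoc, trace_mul_comm, ← mul_assoc, gsq hΓ j]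
      simp
    rw [e1, trace_smul, Even.neg_one_pow (Odd.add_one ho)] at e2
    simp at e2
    have h2 : A.trace + A.trace = 0 := by linear_combination e2
    exact add_self_eq_zero.mp h2

/-- multiplying a nodup product by one more gamma toggles its index, up to sign -/
lemma toggle {l : List (Fin 7)} (hl : l.Nodup) (b : Fin 7) :
    ∃ (r : List (Fin 7)) (ε : ℂ), r.Nodup ∧ (ε = 1 ∨ ε = -1) ∧
      pl Γ l * Γ b = ε • pl Γ r ∧ r.toFinset = symmDiff l.toFinset {b} := by
  induction l with
  | nil =>
      refine ⟨[b], 1, by simp, Or.inl rfl, by simp [pl_nil, pl_cons], ?_⟩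
      ext x
      simp [Finset.mem_symmDiff]
  | cons a l ih =>
      have ha : a ∉ l := (List.nodup_cons.mp hl).1
      have hl' : l.Nodup := (List.nodup_cons.mp hl).2
      by_cases hab : a = b
      · subst hab
        refine ⟨l, (-1 : ℂ) ^ (l.length + 1), hl', ?_, ?_, ?_⟩
        · rcases Nat.even_or_odd (l.length + 1) with h | h
          · exact Or.inl (Even.neg_one_pow h)
          · exact Or.inr (Odd.neg_one_pow h)
        · rw [pl_cons, mul_assoc, com_right hΓ ha, mul_smul_comm, ← mul_assoc,
            gsq hΓ a, neg_one_mul, smul_neg, pow_succ, mul_neg_one, neg_smul]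
        · ext x
          simp only [Finset.mem_symmDiff, List.toFinset_cons, List.mem_toFinset,
            Finset.mem_insert, Finset.mem_singleton]
          by_cases h2 : x = a <;> by_cases h3 : x ∈ l <;> simp_all
      · obtain ⟨r, ε, hr, hε, heq, hfs⟩ := ih hl'
        have har : a ∉ r := by
          intro hmem
          have := hfs ▸ List.mem_toFinset.mpr hmem
          rw [Finset.mem_symmDiff] at this
          rcases this with ⟨h1, _⟩ | ⟨h1, _⟩
          · exact ha (List.mem_toFinset.mp h1)
          · exact hab (Finset.mem_singleton.mp h1)
        refine ⟨a :: r, ε, List.nodup_cons.mpr ⟨har, hr⟩, hε, ?_, ?_⟩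
        · rw [pl_cons, mul_assoc, heq, mul_smul_comm, ← pl_cons]
        · have hfs' : ∀ y, y ∈ r ↔ (y ∈ l ∧ y ≠ b) ∨ (y = b ∧ y ∉ l) := by
            intro y
            rw [← List.mem_toFinset, hfs, Finset.mem_symmDiff]
            simp
          ext x
          simp only [List.toFinset_cons, Finset.mem_insert, List.mem_toFinset,
            Finset.mem_symmDiff, Finset.mem_singleton, hfs']
          by_cases h1 : x = a <;> by_cases h2 : x = b <;> by_cases h3 : x ∈ l <;>
            simp_all

/-- product of two nodup gamma products reduces to the symmetric difference, up to sign -/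
lemma mul_reduce {m : List (Fin 7)} (hm : m.Nodup) :
    ∀ {l : List (Fin 7)}, l.Nodup →
    ∃ (r : List (Fin 7)) (ε : ℂ), r.Nodup ∧ (ε = 1 ∨ ε = -1) ∧
      pl Γ l * pl Γ m = ε • pl Γ r ∧ r.toFinset = symmDiff l.toFinset m.toFinset := by
  induction m with
  | nil =>
      intro l hl
      refine ⟨l, 1, hl, Or.inl rfl, by simp [pl_nil], ?_⟩
      ext x
      simp [Finset.mem_symmDiff]
  | cons b m ihm =>
      intro l hl
      have hb : b ∉ m := (List.nodup_cons.mp hm).1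
      have hm' : m.Nodup := (List.nodup_cons.mp hm).2
      obtain ⟨r₁, ε₁, hr₁, hε₁, heq₁, hfs₁⟩ := toggle hΓ hl b
      obtain ⟨r, ε₂, hr, hε₂, heq₂, hfs⟩ := ihm hm' hr₁
      refine ⟨r, ε₁ * ε₂, hr, ?_, ?_, ?_⟩
      · rcases hε₁ with rfl | rfl <;> rcases hε₂ with rfl | rfl <;> simp
      · rw [pl_cons, ← mul_assoc, heq₁, smul_mul_assoc, heq₂, smul_smul]
      · rw [hfs, hfs₁, List.toFinset_cons, symmDiff_assoc]
        congr 1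
        ext x
        simp only [Finset.mem_symmDiff, Finset.mem_singleton, List.mem_toFinset,
          Finset.mem_insert]
        by_cases h2 : x = b <;> by_cases h3 : x ∈ m <;> simp_all

/-- conjugation by a gamma not in the list -/
lemma conj_not_mem {μ : Fin 7} {l : List (Fin 7)} (h : μ ∉ l) :
    Γ μ * pl Γ l * Γ μ = ((-1 : ℂ)) ^ (l.length + 1) • pl Γ l := by
  rw [mul_assoc, com_right hΓ h, mul_smul_comm, ← mul_assoc, gsq hΓ μ,
    neg_one_mul, smul_neg, pow_succ, mul_neg_one, neg_smul]

/-- conjugation by a gamma in the list -/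
lemma conj_mem {μ : Fin 7} {l : List (Fin 7)} (hl : l.Nodup) (h : μ ∈ l) :
    Γ μ * pl Γ l * Γ μ = ((-1 : ℂ)) ^ l.length • pl Γ l := by
  induction l with
  | nil => simp at h
  | cons a l ih =>
      have ha : a ∉ l := (List.nodup_cons.mp hl).1
      have hl' : l.Nodup := (List.nodup_cons.mp hl).2
      by_cases hμa : μ = a
      · subst hμa
        calc Γ μ * pl Γ (μ :: l) * Γ μ
            = (Γ μ * Γ μ) * (pl Γ l * Γ μ) := by rw [pl_cons]; noncomm_ring
          _ = -(pl Γ l * Γ μ) := by rw [gsq hΓ]; noncomm_ring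
          _ = -((-1 : ℂ) ^ l.length • (Γ μ * pl Γ l)) := by rw [com_right hΓ ha]
          _ = (-1 : ℂ) ^ (μ :: l).length • pl Γ (μ :: l) := by
              rw [pl_cons, List.length_cons, pow_succ, mul_neg_one, neg_smul]
      · have hμl : μ ∈ l := by
          rcases List.mem_cons.mp h with rfl | hx
          · exact absurd rfl hμa
          · exact hx
        calc Γ μ * pl Γ (a :: l) * Γ μ
            = -(Γ a * (Γ μ * pl Γ l * Γ μ)) := by
              rw [pl_cons, ← mul_assoc, gswap hΓ hμa]; noncomm_ring
          _ = -(Γ a * ((-1 : ℂ) ^ l.length • pl Γ l)) := by rw [ih hl' hμl]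
          _ = (-1 : ℂ) ^ (a :: l).length • pl Γ (a :: l) := by
              rw [mul_smul_comm, pl_cons, List.length_cons, pow_succ, mul_neg_one,
                neg_smul]

/-- sum of conjugations by all 7 gammas -/
lemma sum_conj {l : List (Fin 7)} (hl : l.Nodup) :
    ∑ μ : Fin 7, Γ μ * pl Γ l * Γ μ
      = (((-1 : ℂ)) ^ l.length * (2 * (l.length : ℂ) - 7)) • pl Γ l := by
  classical
  have hfs : Finset.univ.filter (fun μ : Fin 7 => μ ∈ l) = l.toFinset := by
    ext x; simp
  have hcard1 : (Finset.univ.filter (fun μ : Fin 7 => μ ∈ l)).card = l.length := by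
    rw [hfs, List.toFinset_card_of_nodup hl]
  have hlen7 : l.length ≤ 7 := by
    have := hcard1 ▸ Finset.card_filter_le Finset.univ (fun μ : Fin 7 => μ ∈ l)
    simpa using this
  have hcard2 : (Finset.univ.filter (fun μ : Fin 7 => ¬ μ ∈ l)).card
      = 7 - l.length := by
    have h := Finset.card_filter_add_card_filter_not
      (s := (Finset.univ : Finset (Fin 7))) (p := fun μ : Fin 7 => μ ∈ l)
    rw [hcard1] at h
    simp only [Finset.card_univ, Fintype.card_fin] at h
    omega
  rw [← Finset.sum_filter_add_sum_filter_not Finset.univ (fun μ : Fin 7 => μ ∈ l)]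
  have h1 : ∑ μ ∈ Finset.univ.filter (fun μ : Fin 7 => μ ∈ l), Γ μ * pl Γ l * Γ μ
      = ((l.length : ℂ) * (-1) ^ l.length) • pl Γ l := by
    rw [Finset.sum_congr rfl (fun μ hμ =>
      conj_mem hΓ hl (Finset.mem_filter.mp hμ).2), Finset.sum_const, hcard1,
      ← Nat.cast_smul_eq_nsmul ℂ, smul_smul]
  have h2 : ∑ μ ∈ Finset.univ.filter (fun μ : Fin 7 => ¬ μ ∈ l),
      Γ μ * pl Γ l * Γ μ
      = (((7 : ℂ) - l.length) * (-1) ^ (l.length + 1)) • pl Γ l := by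
    rw [Finset.sum_congr rfl (fun μ hμ =>
      conj_not_mem hΓ (Finset.mem_filter.mp hμ).2), Finset.sum_const, hcard2,
      ← Nat.cast_smul_eq_nsmul ℂ, smul_smul]
    congr 1
    have : ((7 - l.length : ℕ) : ℂ) = 7 - (l.length : ℂ) := by
      push_cast [Nat.cast_sub hlen7]
      ring
    rw [this]
  rw [h1, h2, ← add_smul]
  congr 1
  rw [pow_succ]
  ring

/-- the sign in `(pl l)ᵀ C = es (length l) • (C * pl l)` -/
def es : ℕ → ℂ
  | 0 => 1
  | n + 1 => (-1) ^ (n + 1) * es n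

lemma transC {C : M8} (hCΓ : ∀ μ, (Γ μ)ᵀ * C = -(C * Γ μ))
    {l : List (Fin 7)} (hl : l.Nodup) :
    (pl Γ l)ᵀ * C = es l.length • (C * pl Γ l) := by
  induction l with
  | nil => simp [pl_nil, es]
  | cons a l ih =>
      have ha : a ∉ l := (List.nodup_cons.mp hl).1
      have hl' : l.Nodup := (List.nodup_cons.mp hl).2
      calc (pl Γ (a :: l))ᵀ * C
          = (pl Γ l)ᵀ * ((Γ a)ᵀ * C) := by
            rw [pl_cons, transpose_mul, mul_assoc]
        _ = -(((pl Γ l)ᵀ * C) * Γ a) := by rw [hCΓ a]; noncomm_ring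
        _ = (-es l.length) • (C * (pl Γ l * Γ a)) := by
            rw [ih hl', smul_mul_assoc, neg_smul, mul_assoc]
        _ = (-es l.length * (-1) ^ l.length) • (C * (Γ a * pl Γ l)) := by
            rw [com_right hΓ ha, mul_smul_comm, smul_smul]
        _ = es (a :: l).length • (C * pl Γ (a :: l)) := by
            rw [pl_cons, List.length_cons]
            congr 1
            show -es l.length * (-1) ^ l.length = (-1) ^ (l.length + 1) * es l.length
            rw [pow_succ]
            ring

omit hΓ in
lemma es_zero : es 0 = 1 := rfl
omit hΓ in
lemma es_one : es 1 = -1 := by norm_num [es]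
omit hΓ in
lemma es_two : es 2 = -1 := by norm_num [es]
omit hΓ in
lemma es_three : es 3 = 1 := by norm_num [es]

/-- gamma product over a finset, in sorted order -/
def PP (Γ : Fin 7 → M8) (A : Finset (Fin 7)) : M8 := pl Γ (A.sort (· ≤ ·))

omit hΓ in
lemma PP_empty : PP Γ ∅ = 1 := by
  rw [PP, Finset.sort_empty, pl_nil]

lemma trace_PP_eq_zero {A : Finset (Fin 7)} (hne : A ≠ ∅) (hA : A.card ≤ 6) :
    (PP Γ A).trace = 0 := by
  apply trace_pl_eq_zero hΓ (Finset.sort_nodup _ _)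
  · intro h
    apply hne
    have := congrArg List.toFinset h
    rwa [Finset.sort_toFinset, List.toFinset_nil] at this
  · rwa [Finset.length_sort]

lemma PP_mul_PP (A B : Finset (Fin 7)) :
    ∃ (r : List (Fin 7)) (ε : ℂ), r.Nodup ∧ (ε = 1 ∨ ε = -1) ∧
      PP Γ A * PP Γ B = ε • pl Γ r ∧ r.toFinset = symmDiff A B := by
  obtain ⟨r, ε, hr, hε, heq, hfs⟩ :=
    mul_reduce hΓ (Finset.sort_nodup B (· ≤ ·)) (Finset.sort_nodup A (· ≤ ·))
  exact ⟨r, ε, hr, hε, heq, by rwa [Finset.sort_toFinset, Finset.sort_toFinset] at hfs⟩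

lemma trace_PP_mul_self (A : Finset (Fin 7)) :
    ∃ ε : ℂ, (ε = 1 ∨ ε = -1) ∧ (PP Γ A * PP Γ A).trace = 8 * ε := by
  obtain ⟨r, ε, hr, hε, heq, hfs⟩ := PP_mul_PP hΓ A A
  rw [symmDiff_self] at hfs
  have hrnil : r = [] := by
    rw [← List.toFinset_eq_empty_iff, hfs]; rfl
  subst hrnil
  refine ⟨ε, hε, ?_⟩
  rw [heq, pl_nil, trace_smul, trace_one]
  simp [mul_comm]

lemma trace_PP_mul_ne {A B : Finset (Fin 7)} (hAB : A ≠ B)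
    (hA : A.card ≤ 3) (hB : B.card ≤ 3) :
    (PP Γ A * PP Γ B).trace = 0 := by
  obtain ⟨r, ε, hr, hε, heq, hfs⟩ := PP_mul_PP hΓ A B
  have hrne : r ≠ [] := by
    intro h
    subst h
    rw [List.toFinset_nil] at hfs
    exact hAB (symmDiff_eq_bot.mp hfs.symm)
  have hrlen : r.length ≤ 6 := by
    have h1 : r.toFinset.card = r.length := List.toFinset_card_of_nodup hr
    rw [hfs] at h1
    have h2 : (symmDiff A B).card ≤ (A ∪ B).card :=
      Finset.card_le_card symmDiff_le_sup
    have h3 := Finset.card_union_le A B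
    omega
  rw [heq, trace_smul, trace_pl_eq_zero hΓ hr hrne hrlen]
  simp

/-- index type: subsets of `Fin 7` of size at most 3 -/
abbrev Idx := {A : Finset (Fin 7) // A.card ≤ 3}

instance : Nonempty Idx := ⟨⟨∅, by simp⟩⟩

omit hΓ in
lemma card_Idx : Fintype.card Idx = 64 := by decide

lemma indepPP : LinearIndependent ℂ (fun A : Idx => PP Γ A.1) := by
  rw [Fintype.linearIndependent_iff]
  intro g hg B
  have h0 := congrArg (fun X => (X * PP Γ B.1).trace) hg
  simp only [Finset.sum_mul, zero_mul, trace_zero, smul_mul_assoc, trace_sum,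
    trace_smul, smul_eq_mul] at h0
  rw [Finset.sum_eq_single B (fun A _ hne => by
      rw [trace_PP_mul_ne hΓ (fun h => hne (Subtype.ext h)) A.2 B.2, mul_zero])
    (fun h => absurd (Finset.mem_univ B) h)] at h0
  obtain ⟨ε, hε, htr⟩ := trace_PP_mul_self hΓ B.1
  rw [htr] at h0
  rcases hε with rfl | rfl
  · simpa using h0
  · simp only [mul_neg, mul_one, neg_eq_zero] at h0
    simpa using h0

omit hΓ in
lemma mul_vecMulVec (M : M8) (a b : Fin 8 → ℂ) :
    M * vecMulVec a b = vecMulVec (M *ᵥ a) b := by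
  ext i j
  simp only [Matrix.mul_apply, vecMulVec_apply, Matrix.mulVec, dotProduct,
    Finset.sum_mul]
  exact Finset.sum_congr rfl fun k _ => by ring

omit hΓ in
lemma vecMulVec_mul (M : M8) (a b : Fin 8 → ℂ) :
    vecMulVec a b * M = vecMulVec a (Mᵀ *ᵥ b) := by
  ext i j
  simp only [Matrix.mul_apply, vecMulVec_apply, Matrix.mulVec, dotProduct,
    transpose_apply, Finset.mul_sum]
  exact Finset.sum_congr rfl fun k _ => by ring

omit hΓ in
lemma vecMulVec_mulVec (a b s : Fin 8 → ℂ) :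
    (vecMulVec a b) *ᵥ s = (b ⬝ᵥ s) • a := by
  ext i
  simp only [Matrix.mulVec, dotProduct, vecMulVec_apply, Pi.smul_apply,
    smul_eq_mul, Finset.sum_mul]
  exact Finset.sum_congr rfl fun k _ => by ring

omit hΓ in
lemma trace_vecMulVec (a b : Fin 8 → ℂ) : (vecMulVec a b).trace = a ⬝ᵥ b := by
  simp [Matrix.trace, Matrix.diag, vecMulVec_apply, dotProduct]

omit hΓ in
lemma sum_mulVec' {ι : Type*} (sf : Finset ι) (f : ι → M8) (v : Fin 8 → ℂ) :
    (∑ i ∈ sf, f i) *ᵥ v = ∑ i ∈ sf, f i *ᵥ v := by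
  ext j
  simp only [Matrix.mulVec, dotProduct, Finset.sum_apply, Matrix.sum_apply,
    Finset.sum_mul]
  exact Finset.sum_comm

omit hΓ in
/-- the key per-term vector identity -/
lemma term_eq {C M : M8} (hM : Mᵀ * C = -(C * M))
    (s t : Fin 8 → ℂ) :
    (s ⬝ᵥ C *ᵥ (M *ᵥ t)) • (M *ᵥ t)
      = -((M * vecMulVec t (C *ᵥ t) * M) *ᵥ s) := by
  have h1 : M * vecMulVec t (C *ᵥ t) * M
      = vecMulVec (M *ᵥ t) (-((C * M) *ᵥ t)) := by
    rw [mul_vecMulVec, vecMulVec_mul, mulVec_mulVec, hM, neg_mulVec]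
  rw [h1, vecMulVec_mulVec]
  have h2 : s ⬝ᵥ C *ᵥ (M *ᵥ t) = ((C * M) *ᵥ t) ⬝ᵥ s := by
    rw [mulVec_mulVec, dotProduct_comm]
  rw [h2]
  simp [neg_dotProduct, neg_smul]

/-- the operator identity `Σ Γ_{μν} Y Γ_{μν} = 7Y − Σ Γ_ν Γ_μ Y Γ_μ Γ_ν` -/
lemma double_sum_eq (Y : M8) :
    ∑ μ : Fin 7, ∑ ν : Fin 7, gamma2 Γ μ ν * Y * gamma2 Γ μ ν
      = (7 : ℂ) • Y - ∑ ν : Fin 7, ∑ μ : Fin 7, Γ ν * (Γ μ * Y * Γ μ) * Γ ν := by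
  have hterm : ∀ μ ν : Fin 7, gamma2 Γ μ ν * Y * gamma2 Γ μ ν
      = (if μ = ν then Y else 0) - Γ ν * (Γ μ * Y * Γ μ) * Γ ν := by
    intro μ ν
    by_cases h : μ = ν
    · subst h
      have hz : gamma2 Γ μ μ = 0 := by simp [gamma2]
      rw [hz, if_pos rfl]
      have : Γ μ * (Γ μ * Y * Γ μ) * Γ μ = (Γ μ * Γ μ) * Y * (Γ μ * Γ μ) := by
        noncomm_ring
      rw [this, gsq hΓ μ]
      noncomm_ring
    · have hg : gamma2 Γ μ ν = Γ μ * Γ ν := by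
        rw [gamma2, gswap hΓ (fun hc => h hc.symm) ]
        rw [sub_neg_eq_add, ← two_smul ℂ (Γ μ * Γ ν), smul_smul]
        norm_num
      rw [hg, if_neg h]
      have h2 : Γ ν * (Γ μ * Y * Γ μ) * Γ ν = (Γ ν * Γ μ) * Y * (Γ μ * Γ ν) := by
        noncomm_ring
      rw [h2, gswap hΓ (fun hc => h hc.symm)]
      noncomm_ring
  calc ∑ μ : Fin 7, ∑ ν : Fin 7, gamma2 Γ μ ν * Y * gamma2 Γ μ ν
      = ∑ μ : Fin 7, ∑ ν : Fin 7,
          ((if μ = ν then Y else 0) - Γ ν * (Γ μ * Y * Γ μ) * Γ ν) := by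
        exact Finset.sum_congr rfl fun μ _ =>
          Finset.sum_congr rfl fun ν _ => hterm μ ν
    _ = (∑ μ : Fin 7, ∑ ν : Fin 7, (if μ = ν then Y else 0))
        - ∑ μ : Fin 7, ∑ ν : Fin 7, Γ ν * (Γ μ * Y * Γ μ) * Γ ν := by
        rw [← Finset.sum_sub_distrib]
        exact Finset.sum_congr rfl fun μ _ => by rw [← Finset.sum_sub_distrib]
    _ = (7 : ℂ) • Y - ∑ ν : Fin 7, ∑ μ : Fin 7, Γ ν * (Γ μ * Y * Γ μ) * Γ ν := by
        congr 1
        · have : ∀ μ : Fin 7, ∑ ν : Fin 7, (if μ = ν then Y else 0) = Y := by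
            intro μ
            simp
          rw [Finset.sum_congr rfl fun μ _ => this μ, Finset.sum_const]
          simp only [Finset.card_univ, Fintype.card_fin]
          rw [← Nat.cast_smul_eq_nsmul ℂ]
          norm_num
        · exact Finset.sum_comm

/-- eigenvalue of `Σ_μ Γ_μ (·) Γ_μ` on a rank-`n` basis element -/
def lam (n : ℕ) : ℂ := (-1) ^ n * (2 * n - 7)

lemma sum_conj_expand {Z : M8} {d : Idx → ℂ}
    (hZ : Z = ∑ A : Idx, d A • PP Γ A.1) :
    ∑ μ : Fin 7, Γ μ * Z * Γ μ
      = ∑ A : Idx, (d A * lam A.1.card) • PP Γ A.1 := by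
  subst hZ
  have h1 : ∀ μ : Fin 7, Γ μ * (∑ A : Idx, d A • PP Γ A.1) * Γ μ
      = ∑ A : Idx, d A • (Γ μ * PP Γ A.1 * Γ μ) := by
    intro μ
    rw [Finset.mul_sum, Finset.sum_mul]
    exact Finset.sum_congr rfl fun A _ => by
      rw [mul_smul_comm, smul_mul_assoc]
  rw [Finset.sum_congr rfl fun μ _ => h1 μ, Finset.sum_comm]
  refine Finset.sum_congr rfl fun A _ => ?_
  rw [← Finset.smul_sum]
  have h2 : ∑ μ : Fin 7, Γ μ * PP Γ A.1 * Γ μ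
      = (((-1 : ℂ)) ^ (A.1.sort (· ≤ ·)).length
          * (2 * ((A.1.sort (· ≤ ·)).length : ℂ) - 7)) • PP Γ A.1 :=
    sum_conj hΓ (Finset.sort_nodup _ _)
  rw [h2, Finset.length_sort, smul_smul, lam]

end OddJacobiAux

open OddJacobiAux in
/-- For all `s, t ∈ ℂ⁸`:
`(t̄t)·s − (t̄s)·t = (1/6)·Σ_{μ,ν=1}^{7}(s̄Γ_{μν}t)·Γ_{μν}t`,
the odd–odd–odd Jacobi identity of `F(4)` in its odd contact grading. -/
theorem odd_jacobi_identity
    (Γ : Fin 7 → Matrix (Fin 8) (Fin 8) ℂ)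
    (hΓ : ∀ μ ν, Γ μ * Γ ν + Γ ν * Γ μ =
      if μ = ν then (-2 : ℂ) • (1 : Matrix (Fin 8) (Fin 8) ℂ) else 0)
    (C : Matrix (Fin 8) (Fin 8) ℂ) (hCunit : IsUnit C) (hCsymm : Cᵀ = C)
    (hCΓ : ∀ μ, (Γ μ)ᵀ * C = -(C * Γ μ))
    (s t : Fin 8 → ℂ) :
    (t ⬝ᵥ C.mulVec t) • s - (t ⬝ᵥ C.mulVec s) • t
      = (6 : ℂ)⁻¹ • ∑ μ, ∑ ν,
          (s ⬝ᵥ C.mulVec ((gamma2 Γ μ ν).mulVec t)) • (gamma2 Γ μ ν).mulVec t := by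
  classical
  set u : Fin 8 → ℂ := C *ᵥ t with hu
  set Y : M8 := vecMulVec t u with hYdef
  -- the basis of M8 given by at-most-cubic gamma products
  have hfr : Fintype.card Idx = Module.finrank ℂ M8 := by
    rw [card_Idx, Module.finrank_matrix]
    simp
  let bas : Module.Basis Idx ℂ M8 :=
    basisOfLinearIndependentOfCardEqFinrank (indepPP hΓ) hfr
  have hbas : ∀ A : Idx, bas A = PP Γ A.1 := fun A => by
    have h := coe_basisOfLinearIndependentOfCardEqFinrank (indepPP hΓ) hfr
    exact congrFun h A
  set c : Idx → ℂ := fun A => bas.repr Y A with hc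
  have hY : Y = ∑ A : Idx, c A • PP Γ A.1 := by
    conv_lhs => rw [← Module.Basis.sum_repr bas Y]
    exact Finset.sum_congr rfl fun A _ => by rw [hbas A]
  -- C-antisymmetry of gamma2
  have htt : ∀ a b : Fin 7, (Γ a)ᵀ * ((Γ b)ᵀ * C) = C * (Γ a * Γ b) := by
    intro a b
    rw [hCΓ b, mul_neg, ← mul_assoc, hCΓ a]
    noncomm_ring
  have hg2C : ∀ μ ν, (gamma2 Γ μ ν)ᵀ * C = -(C * gamma2 Γ μ ν) := by
    intro μ ν
    have e1 : (gamma2 Γ μ ν)ᵀ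
        = (2 : ℂ)⁻¹ • ((Γ ν)ᵀ * (Γ μ)ᵀ - (Γ μ)ᵀ * (Γ ν)ᵀ) := by
      rw [gamma2, transpose_smul, transpose_sub, transpose_mul, transpose_mul]
    rw [e1, smul_mul_assoc, sub_mul, mul_assoc, mul_assoc, htt ν μ, htt μ ν,
      gamma2, mul_smul_comm, mul_sub, ← smul_neg, neg_sub]
  -- symmetry of C • Y
  have hYsymC : Yᵀ * C = C * Y := by
    have h1 : Yᵀ = vecMulVec u t := by
      rw [hYdef]
      ext i j
      simp [transpose_apply, vecMulVec_apply, mul_comm]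
    have h2 : t ᵥ* C = C *ᵥ t := by
      conv_lhs => rw [← hCsymm]
      exact vecMul_transpose C t
    rw [h1, OddJacobiAux.vecMulVec_mul, hYdef, mul_vecMulVec, hCsymm, ← hu]
  -- vanishing of rank-1 and rank-2 coefficients
  have hPPT : ∀ A : Idx, (PP Γ A.1)ᵀ * C = es A.1.card • (C * PP Γ A.1) := by
    intro A
    have h := transC hΓ hCΓ (Finset.sort_nodup A.1 (· ≤ ·))
    rwa [Finset.length_sort] at h
  have hlin := Fintype.linearIndependent_iff.mp (indepPP (Γ := Γ) hΓ)
  have hvan : ∀ A : Idx, c A * es A.1.card - c A = 0 := by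
    have e1 : Yᵀ * C = C * ∑ A : Idx, (c A * es A.1.card) • PP Γ A.1 := by
      conv_lhs => rw [hY]
      rw [transpose_sum, Finset.sum_mul, Finset.mul_sum]
      refine Finset.sum_congr rfl fun A _ => ?_
      rw [transpose_smul, smul_mul_assoc, hPPT A, smul_smul, mul_smul_comm]
    have e2 : C * ∑ A : Idx, (c A * es A.1.card) • PP Γ A.1
        = C * ∑ A : Idx, c A • PP Γ A.1 := by
      rw [← e1, hYsymC, hY]
    have e3 := hCunit.mul_left_cancel e2
    have e4 : ∑ A : Idx, (c A * es A.1.card - c A) • PP Γ A.1 = 0 := by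
      have : ∀ A : Idx, (c A * es A.1.card - c A) • PP Γ A.1
          = (c A * es A.1.card) • PP Γ A.1 - c A • PP Γ A.1 := fun A => by
        rw [sub_smul]
      rw [Finset.sum_congr rfl fun A _ => this A, Finset.sum_sub_distrib, e3,
        sub_self]
    exact hlin _ e4
  have hvan12 : ∀ A : Idx, A.1.card = 1 ∨ A.1.card = 2 → c A = 0 := by
    intro A hA
    have h := hvan A
    rcases hA with h1 | h1 <;> rw [h1] at h
    · rw [es_one] at h; linear_combination -h / 2
    · rw [es_two] at h; linear_combination -h / 2
  -- the two iterated conjugation sums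
  have hS1 : ∑ μ : Fin 7, Γ μ * Y * Γ μ
      = ∑ A : Idx, (c A * lam A.1.card) • PP Γ A.1 := sum_conj_expand hΓ hY
  have hSS : ∑ ν : Fin 7, ∑ μ : Fin 7, Γ ν * (Γ μ * Y * Γ μ) * Γ ν
      = ∑ A : Idx, ((c A * lam A.1.card) * lam A.1.card) • PP Γ A.1 := by
    have h1 : ∀ ν : Fin 7, ∑ μ : Fin 7, Γ ν * (Γ μ * Y * Γ μ) * Γ ν
        = Γ ν * (∑ μ : Fin 7, Γ μ * Y * Γ μ) * Γ ν := by
      intro ν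
      rw [Finset.mul_sum, Finset.sum_mul]
    rw [Finset.sum_congr rfl fun ν _ => h1 ν]
    exact sum_conj_expand hΓ hS1
  -- the trace of Y
  have htrY : Y.trace = 8 * c ⟨∅, by norm_num⟩ := by
    conv_lhs => rw [hY]
    rw [trace_sum]
    simp only [trace_smul, smul_eq_mul]
    rw [Finset.sum_eq_single (⟨∅, by norm_num⟩ : Idx)]
    · rw [PP_empty, trace_one]
      simp [mul_comm]
    · intro A _ hne
      have hA : A.1 ≠ ∅ := fun h => hne (Subtype.ext h)
      rw [trace_PP_eq_zero hΓ hA (le_trans A.2 (by norm_num)), mul_zero]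
    · intro h
      exact absurd (Finset.mem_univ _) h
  -- the matrix identity
  have hmat : ∑ μ : Fin 7, ∑ ν : Fin 7, gamma2 Γ μ ν * Y * gamma2 Γ μ ν
      = (6 : ℂ) • Y - (6 * Y.trace) • (1 : M8) := by
    rw [double_sum_eq hΓ Y, hSS]
    have hdiff : ∑ A : Idx, ((c A * lam A.1.card) * lam A.1.card) • PP Γ A.1
        = Y + (48 * c ⟨∅, by norm_num⟩) • (1 : M8) := by
      have hsplit : ∀ A : Idx, ((c A * lam A.1.card) * lam A.1.card) • PP Γ A.1
          = c A • PP Γ A.1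
            + (c A * (lam A.1.card * lam A.1.card - 1)) • PP Γ A.1 := by
        intro A
        have hsc : (c A * lam A.1.card) * lam A.1.card
            = c A + c A * (lam A.1.card * lam A.1.card - 1) := by ring
        rw [hsc, add_smul]
      rw [Finset.sum_congr rfl fun A _ => hsplit A, Finset.sum_add_distrib, ← hY]
      congr 1
      rw [Finset.sum_eq_single (⟨∅, by norm_num⟩ : Idx)]
      · rw [PP_empty]
        congr 1
        show c _ * (lam (Finset.card ∅) * lam (Finset.card ∅) - 1) = 48 * c _
        rw [Finset.card_empty]
        have : lam 0 = -7 := by norm_num [lam]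
        rw [this]
        ring
      · intro A _ hne
        have hA : A.1 ≠ ∅ := fun h => hne (Subtype.ext h)
        have hcard : A.1.card = 1 ∨ A.1.card = 2 ∨ A.1.card = 3 := by
          have h2 := A.2
          have h3 : A.1.card ≠ 0 := fun h => hA (Finset.card_eq_zero.mp h)
          omega
        rcases hcard with h1 | h1 | h1
        · rw [hvan12 A (Or.inl h1)]
          simp
        · rw [hvan12 A (Or.inr h1)]
          simp
        · rw [h1]
          have : lam 3 = 1 := by norm_num [lam]
          rw [this]
          norm_num
      · intro h
        exact absurd (Finset.mem_univ _) h
    rw [hdiff, htrY]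
    have h48 : (6 : ℂ) * (8 * c ⟨∅, by norm_num⟩) = 48 * c ⟨∅, by norm_num⟩ := by
      ring
    rw [h48]
    have h7 : (7 : ℂ) • Y = (6 : ℂ) • Y + Y := by
      rw [show (7 : ℂ) = 6 + 1 by norm_num, add_smul, one_smul]
    rw [h7]
    abel
  -- conclude
  have hterm : ∀ μ ν : Fin 7,
      (s ⬝ᵥ C *ᵥ ((gamma2 Γ μ ν) *ᵥ t)) • ((gamma2 Γ μ ν) *ᵥ t)
        = -((gamma2 Γ μ ν * Y * gamma2 Γ μ ν) *ᵥ s) := by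
    intro μ ν
    exact term_eq (hg2C μ ν) s t
  rw [Finset.sum_congr rfl fun μ _ => Finset.sum_congr rfl fun ν _ => hterm μ ν]
  have hexp : ((∑ μ : Fin 7, ∑ ν : Fin 7, gamma2 Γ μ ν * Y * gamma2 Γ μ ν) *ᵥ s)
      = ∑ μ : Fin 7, ∑ ν : Fin 7, ((gamma2 Γ μ ν * Y * gamma2 Γ μ ν) *ᵥ s) := by
    rw [sum_mulVec']
    exact Finset.sum_congr rfl fun μ _ => sum_mulVec' _ _ _
  have hsum : ∑ μ : Fin 7, ∑ ν : Fin 7,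
      -((gamma2 Γ μ ν * Y * gamma2 Γ μ ν) *ᵥ s)
      = -(((6 : ℂ) • Y - (6 * Y.trace) • (1 : M8)) *ᵥ s) := by
    calc ∑ μ : Fin 7, ∑ ν : Fin 7, -((gamma2 Γ μ ν * Y * gamma2 Γ μ ν) *ᵥ s)
        = ∑ μ : Fin 7, -(∑ ν : Fin 7, (gamma2 Γ μ ν * Y * gamma2 Γ μ ν) *ᵥ s) :=
          Finset.sum_congr rfl fun μ _ => Finset.sum_neg_distrib _
      _ = -(∑ μ : Fin 7, ∑ ν : Fin 7, (gamma2 Γ μ ν * Y * gamma2 Γ μ ν) *ᵥ s) :=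
          Finset.sum_neg_distrib _
      _ = -(((6 : ℂ) • Y - (6 * Y.trace) • (1 : M8)) *ᵥ s) := by
          rw [← hexp, hmat]
  rw [hsum]
  have hYs : Y *ᵥ s = (t ⬝ᵥ C *ᵥ s) • t := by
    rw [hYdef, OddJacobiAux.vecMulVec_mulVec]
    congr 1
    rw [hu, dotProduct_mulVec]
    congr 1
    conv_rhs => rw [← hCsymm]
    exact (vecMul_transpose C t).symm
  have htr2 : Y.trace = t ⬝ᵥ C *ᵥ t := by
    rw [hYdef, OddJacobiAux.trace_vecMulVec, hu]
  rw [sub_mulVec, smul_mulVec, smul_mulVec, one_mulVec, hYs, htr2]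
  module

end
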